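/- Let Γ₁ be an n×m₁ contraction and Γ₂ an n×m₂ contraction, and let T = [Γ₁, D_{Γ₁ᴴ}Γ₂] be the associated row contraction. Then the squared defect operator of T factorizes as I − TᴴT = [[D_{Γ₁}, 0],[−Γ₂ᴴΓ₁, D_{Γ₂}]] · [[D_{Γ₁}, −Γ₁ᴴΓ₂],[0, D_{Γ₂}]], where D_{Γᵢ} = (I − ΓᵢᴴΓᵢ)^{1/2} and D_{Γ₁ᴴ} = (I − Γ₁Γ₁ᴴ)^{1/2}. -/

import Mathlib

open scoped Matrix Matrix.Norms.L2Operator ComplexOrder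

/-- The unique positive semidefinite square root of a matrix, extended by `0` to matrices that
are not positive semidefinite. -/
noncomputable def psdSqrt {m : ℕ} (A : Matrix (Fin m) (Fin m) ℂ) : Matrix (Fin m) (Fin m) ℂ :=
  letI := Classical.dec A.PosSemidef
  if h : A.PosSemidef then
    (h.1.eigenvectorUnitary : Matrix (Fin m) (Fin m) ℂ) *
      Matrix.diagonal ((↑) ∘ Real.sqrt ∘ h.1.eigenvalues) *
      (star h.1.eigenvectorUnitary : Matrix (Fin m) (Fin m) ℂ)
  else 0

noncomputable def Matrix.PosSemidef.sqrt {m : ℕ} {A : Matrix (Fin m) (Fin m) ℂ}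
    (h : A.PosSemidef) : Matrix (Fin m) (Fin m) ℂ :=
  (h.1.eigenvectorUnitary : Matrix (Fin m) (Fin m) ℂ) *
    Matrix.diagonal ((↑) ∘ Real.sqrt ∘ h.1.eigenvalues) *
    (star h.1.eigenvectorUnitary : Matrix (Fin m) (Fin m) ℂ)

lemma Matrix.PosSemidef.posSemidef_sqrt {m : ℕ} {A : Matrix (Fin m) (Fin m) ℂ}
    (h : A.PosSemidef) : h.sqrt.PosSemidef := by
  unfold Matrix.PosSemidef.sqrt
  rw [Matrix.star_eq_conjTranspose]
  apply Matrix.PosSemidef.mul_mul_conjTranspose_same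
  apply Matrix.PosSemidef.diagonal
  intro i
  simp only [Pi.zero_apply, Function.comp_apply]
  exact_mod_cast Real.sqrt_nonneg _

lemma Matrix.PosSemidef.sqrt_mul_self {m : ℕ} {A : Matrix (Fin m) (Fin m) ℂ}
    (h : A.PosSemidef) : h.sqrt * h.sqrt = A := by
  have hs := h.1.spectral_theorem
  rw [Unitary.conjStarAlgAut_apply] at hs
  refine Eq.trans ?_ hs.symm
  have hU2 : (star h.1.eigenvectorUnitary : Matrix (Fin m) (Fin m) ℂ) * h.1.eigenvectorUnitary = 1 :=
    Matrix.mem_unitaryGroup_iff'.mp h.1.eigenvectorUnitary.2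
  unfold Matrix.PosSemidef.sqrt
  simp only [Matrix.mul_assoc]
  rw [← Matrix.mul_assoc (star _ : Matrix (Fin m) (Fin m) ℂ) (h.1.eigenvectorUnitary : Matrix (Fin m) (Fin m) ℂ), hU2, Matrix.one_mul, ← Matrix.mul_assoc (Matrix.diagonal _), Matrix.diagonal_mul_diagonal]
  congr 3
  funext i
  simp only [Function.comp_apply]
  rw [← Complex.ofReal_mul, Real.mul_self_sqrt (h.eigenvalues_nonneg i)]
  rfl

open Matrix Polynomial in
lemma psdSqrt_eq {m : ℕ} {A : Matrix (Fin m) (Fin m) ℂ} (h : A.PosSemidef) :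
    psdSqrt A = h.sqrt := by
  rw [psdSqrt]
  exact dif_pos h

open Matrix Polynomial in
lemma psd_one_sub {n m : ℕ} (Γ : Matrix (Fin n) (Fin m) ℂ) (h : ‖Γ‖ ≤ 1) :
    (1 - Γᴴ * Γ).PosSemidef := by
  refine Matrix.PosSemidef.of_dotProduct_mulVec_nonneg ?_ ?_
  · simp [Matrix.IsHermitian, Matrix.conjTranspose_sub, Matrix.conjTranspose_mul]
  · intro x
    have hx : star x ⬝ᵥ ((1 - Γᴴ * Γ) *ᵥ x)
        = star x ⬝ᵥ x - star (Γ *ᵥ x) ⬝ᵥ (Γ *ᵥ x) := by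
      rw [Matrix.sub_mulVec, Matrix.one_mulVec, dotProduct_sub, ← Matrix.mulVec_mulVec,
        dotProduct_mulVec, ← Matrix.star_mulVec]
    set xE : EuclideanSpace ℂ (Fin m) := WithLp.toLp 2 x with hxE
    set yE : EuclideanSpace ℂ (Fin n) := WithLp.toLp 2 (Γ *ᵥ x) with hyE
    have h1 : star x ⬝ᵥ x = ((‖xE‖ : ℂ))^2 := by
      rw [hxE, dotProduct_comm, ← EuclideanSpace.inner_toLp_toLp, inner_self_eq_norm_sq_to_K]; rfl
    have h2 : star (Γ *ᵥ x) ⬝ᵥ (Γ *ᵥ x) = ((‖yE‖ : ℂ))^2 := by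
      rw [hyE, dotProduct_comm, ← EuclideanSpace.inner_toLp_toLp, inner_self_eq_norm_sq_to_K]; rfl
    have hle : ‖yE‖ ≤ ‖xE‖ := by
      have := Matrix.l2_opNorm_mulVec Γ xE
      calc ‖yE‖ ≤ ‖Γ‖ * ‖xE‖ := this
        _ ≤ 1 * ‖xE‖ := by gcongr
        _ = ‖xE‖ := one_mul _
    rw [hx, h1, h2]
    have : (0:ℝ) ≤ ‖xE‖^2 - ‖yE‖^2 := by nlinarith [norm_nonneg yE, norm_nonneg xE]
    have := Complex.zero_le_real.2 this
    push_cast at this ⊢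
    convert this using 1

/-- Conjugation by a unitary as an ℝ-algebra hom. -/
noncomputable def conjHom {k : ℕ} (U : Matrix (Fin k) (Fin k) ℂ)
    (h1 : U * star U = 1) (h2 : star U * U = 1) :
    Matrix (Fin k) (Fin k) ℂ →ₐ[ℝ] Matrix (Fin k) (Fin k) ℂ where
  toFun M := U * M * star U
  map_one' := by show U * 1 * star U = 1; rw [mul_one, h1]
  map_mul' M N := by
    simp only [Matrix.mul_assoc]
    rw [← Matrix.mul_assoc (star U) U, h2, Matrix.one_mul]
  map_zero' := by simp
  map_add' M N := by noncomm_ring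
  commutes' r := by
    simp only [Algebra.algebraMap_eq_smul_one]
    rw [Matrix.mul_smul, mul_one, Matrix.smul_mul, h1]

open Matrix Polynomial in
lemma sqrt_eq_aeval {k : ℕ} {A : Matrix (Fin k) (Fin k) ℂ} (hA : A.PosSemidef)
    (p : ℝ[X]) (hp : ∀ i, p.eval (hA.1.eigenvalues i) = Real.sqrt (hA.1.eigenvalues i)) :
    hA.sqrt = aeval A p := by
  have hU1 : (hA.1.eigenvectorUnitary : Matrix (Fin k) (Fin k) ℂ) * star hA.1.eigenvectorUnitary = 1 :=
    Matrix.mem_unitaryGroup_iff.mp hA.1.eigenvectorUnitary.2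
  have hU2 : (star hA.1.eigenvectorUnitary : Matrix (Fin k) (Fin k) ℂ) * hA.1.eigenvectorUnitary = 1 :=
    Matrix.mem_unitaryGroup_iff'.mp hA.1.eigenvectorUnitary.2
  have hdiag : aeval (Matrix.diagonal (RCLike.ofReal ∘ hA.1.eigenvalues) : Matrix (Fin k) (Fin k) ℂ) p
      = Matrix.diagonal ((↑) ∘ Real.sqrt ∘ hA.1.eigenvalues) := by
    rw [show (Matrix.diagonal (RCLike.ofReal ∘ hA.1.eigenvalues) : Matrix (Fin k) (Fin k) ℂ)
        = Matrix.diagonalAlgHom (α := ℂ) ℝ ((↑) ∘ hA.1.eigenvalues) from rfl,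
      aeval_algHom_apply, Matrix.diagonalAlgHom_apply]
    have hv : (aeval ((↑) ∘ hA.1.eigenvalues : Fin k → ℂ) p : Fin k → ℂ)
        = (↑) ∘ Real.sqrt ∘ hA.1.eigenvalues := by
      funext i
      have h1 : aeval ((hA.1.eigenvalues i : ℂ)) p = Pi.evalAlgHom ℝ (fun _ : Fin k => ℂ) i
          (aeval ((↑) ∘ hA.1.eigenvalues : Fin k → ℂ) p) := by
        rw [← aeval_algHom_apply]; rfl
      have h2 : ((hA.1.eigenvalues i : ℂ)) = algebraMap ℝ ℂ (hA.1.eigenvalues i) := rfl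
      have h3 : aeval ((hA.1.eigenvalues i : ℂ)) p = ((p.eval (hA.1.eigenvalues i) : ℝ) : ℂ) := by
        rw [h2, aeval_algebraMap_apply_eq_algebraMap_eval]
        norm_num [aeval_def, eval₂_eq_eval_map]
      have := h1.symm.trans h3
      simpa [hp i] using this
    rw [hv]
  have key := aeval_algHom_apply (conjHom (hA.1.eigenvectorUnitary : Matrix (Fin k) (Fin k) ℂ) hU1 hU2)
    (Matrix.diagonal (RCLike.ofReal ∘ hA.1.eigenvalues)) p
  have hAeq : conjHom (hA.1.eigenvectorUnitary : Matrix (Fin k) (Fin k) ℂ) hU1 hU2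
      (Matrix.diagonal (RCLike.ofReal ∘ hA.1.eigenvalues)) = A := (hA.1.spectral_theorem).symm
  rw [hAeq] at key
  rw [key, hdiag]
  rfl

open Matrix Polynomial in
lemma intertwine_pow {k l : ℕ} (X : Matrix (Fin l) (Fin k) ℂ) (A : Matrix (Fin k) (Fin k) ℂ)
    (B : Matrix (Fin l) (Fin l) ℂ) (h : X * A = B * X) (j : ℕ) : X * A ^ j = B ^ j * X := by
  induction j with
  | zero => simp
  | succ j ih => rw [pow_succ, ← Matrix.mul_assoc, ih, Matrix.mul_assoc, h, pow_succ,
      Matrix.mul_assoc]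

open Matrix Polynomial in
lemma intertwine_aeval {k l : ℕ} (X : Matrix (Fin l) (Fin k) ℂ) (A : Matrix (Fin k) (Fin k) ℂ)
    (B : Matrix (Fin l) (Fin l) ℂ) (h : X * A = B * X) (p : ℝ[X]) :
    X * aeval A p = aeval B p * X := by
  induction p using Polynomial.induction_on' with
  | add f g hf hg => rw [map_add, map_add, Matrix.mul_add, hf, hg, Matrix.add_mul]
  | monomial j c =>
    rw [aeval_monomial, aeval_monomial, Algebra.algebraMap_eq_smul_one]
    rw [Algebra.algebraMap_eq_smul_one, Matrix.smul_mul, Matrix.one_mul, Matrix.mul_smul,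
      Matrix.smul_mul, Matrix.smul_mul, Matrix.one_mul, intertwine_pow X A B h j]

open Matrix Polynomial in
lemma intertwine_sqrt {k l : ℕ} {A : Matrix (Fin k) (Fin k) ℂ} {B : Matrix (Fin l) (Fin l) ℂ}
    (X : Matrix (Fin l) (Fin k) ℂ) (hA : A.PosSemidef) (hB : B.PosSemidef)
    (h : X * A = B * X) : X * hA.sqrt = hB.sqrt * X := by
  classical
  set s : Finset ℝ :=
    (Finset.univ.image hA.1.eigenvalues) ∪ (Finset.univ.image hB.1.eigenvalues) with hs
  set p : ℝ[X] := Lagrange.interpolate s id Real.sqrt with hp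
  have hnode : ∀ x ∈ s, p.eval x = Real.sqrt x := by
    intro x hx
    exact Lagrange.eval_interpolate_at_node Real.sqrt (Set.injOn_id _) hx
  rw [sqrt_eq_aeval hA p (fun i => hnode _ (Finset.mem_union_left _
      (Finset.mem_image_of_mem _ (Finset.mem_univ i)))),
    sqrt_eq_aeval hB p (fun i => hnode _ (Finset.mem_union_right _
      (Finset.mem_image_of_mem _ (Finset.mem_univ i)))),
    intertwine_aeval X A B h p]

/-- **Factorization of the squared defect operator of a row contraction.** For contractions
`Γ₁`, `Γ₂` and the row contraction `T = [Γ₁, D_{Γ₁ᴴ}Γ₂]`, one has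
`I − TᴴT = [[D_{Γ₁}, 0],[−Γ₂ᴴΓ₁, D_{Γ₂}]] ⬝ [[D_{Γ₁}, −Γ₁ᴴΓ₂],[0, D_{Γ₂}]]`. -/
theorem defect_sq_of_rowContraction
    {n m₁ m₂ : ℕ} (Γ₁ : Matrix (Fin n) (Fin m₁) ℂ) (Γ₂ : Matrix (Fin n) (Fin m₂) ℂ)
    (hΓ₁ : ‖Γ₁‖ ≤ 1) (hΓ₂ : ‖Γ₂‖ ≤ 1)
    (T : Matrix (Fin n) (Fin m₁ ⊕ Fin m₂) ℂ)
    (hT : T = Matrix.fromCols Γ₁ (psdSqrt (1 - Γ₁ * Γ₁ᴴ) * Γ₂)) :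
    1 - Tᴴ * T =
      Matrix.fromBlocks (psdSqrt (1 - Γ₁ᴴ * Γ₁)) 0
          (-(Γ₂ᴴ * Γ₁)) (psdSqrt (1 - Γ₂ᴴ * Γ₂)) *
        Matrix.fromBlocks (psdSqrt (1 - Γ₁ᴴ * Γ₁)) (-(Γ₁ᴴ * Γ₂))
          0 (psdSqrt (1 - Γ₂ᴴ * Γ₂)) := by
  have hB : (1 - Γ₁ᴴ * Γ₁).PosSemidef := psd_one_sub Γ₁ hΓ₁
  have hA : (1 - Γ₁ * Γ₁ᴴ).PosSemidef := by
    have := psd_one_sub Γ₁ᴴ (by rw [Matrix.l2_opNorm_conjTranspose]; exact hΓ₁)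
    simpa using this
  have hC : (1 - Γ₂ᴴ * Γ₂).PosSemidef := psd_one_sub Γ₂ hΓ₂
  set D1 := psdSqrt (1 - Γ₁ᴴ * Γ₁) with hD1
  set D2 := psdSqrt (1 - Γ₂ᴴ * Γ₂) with hD2
  set Dc := psdSqrt (1 - Γ₁ * Γ₁ᴴ) with hDc
  have hD1sq : D1 * D1 = 1 - Γ₁ᴴ * Γ₁ := by rw [hD1, psdSqrt_eq hB]; exact hB.sqrt_mul_self
  have hD2sq : D2 * D2 = 1 - Γ₂ᴴ * Γ₂ := by rw [hD2, psdSqrt_eq hC]; exact hC.sqrt_mul_self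
  have hDcsq : Dc * Dc = 1 - Γ₁ * Γ₁ᴴ := by rw [hDc, psdSqrt_eq hA]; exact hA.sqrt_mul_self
  have hDcH : Dcᴴ = Dc := by rw [hDc, psdSqrt_eq hA]; exact hA.posSemidef_sqrt.1
  have hint : Γ₁ᴴ * Dc = D1 * Γ₁ᴴ := by
    rw [hDc, hD1, psdSqrt_eq hA, psdSqrt_eq hB]
    exact intertwine_sqrt Γ₁ᴴ hA hB (by
      rw [Matrix.mul_sub, Matrix.sub_mul, Matrix.mul_one, Matrix.one_mul, Matrix.mul_assoc])
  have hint2 : Dc * Γ₁ = Γ₁ * D1 := by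
    rw [hDc, hD1, psdSqrt_eq hA, psdSqrt_eq hB]
    exact (intertwine_sqrt Γ₁ hB hA (by
      rw [Matrix.mul_sub, Matrix.sub_mul, Matrix.mul_one, Matrix.one_mul, Matrix.mul_assoc])).symm
  subst hT
  rw [Matrix.conjTranspose_fromCols_eq_fromRows_conjTranspose,
    Matrix.fromRows_mul_fromCols, Matrix.fromBlocks_multiply, sub_eq_add_neg,
    Matrix.fromBlocks_neg, ← Matrix.fromBlocks_one, Matrix.fromBlocks_add]
  refine Matrix.fromBlocks_inj.mpr ⟨?_, ?_, ?_, ?_⟩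
  · rw [hD1sq]; noncomm_ring; simp
  · rw [← Matrix.mul_assoc, hint, Matrix.mul_assoc]
    simp [Matrix.mul_neg]
  · simp only [Matrix.conjTranspose_mul, hDcH]
    rw [Matrix.mul_assoc Γ₂ᴴ, hint2, ← Matrix.mul_assoc]
    simp [Matrix.neg_mul]
  · simp only [Matrix.conjTranspose_mul, hDcH, hD2sq]
    have h4 : Γ₂ᴴ * Dc * (Dc * Γ₂) = Γ₂ᴴ * (Dc * Dc) * Γ₂ := by
      simp only [Matrix.mul_assoc]
    rw [h4, hDcsq]
    noncomm_ring
    simp [Matrix.mul_add, Matrix.add_mul, Matrix.mul_smul, Matrix.smul_mul, Matrix.mul_one,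
      Matrix.mul_assoc]
    abel
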